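/- For any real numbers t₁, …, t_m in (0,1) and any reals c₁, …, c_m, one has ∑_{i=1}^m ∑_{j=1}^m (min(t_i,t_j)/max(t_i,t_j)) · ((1−max(t_i,t_j))/(1−min(t_i,t_j))) c_i c_j ≥ 0; that is, the kernel (s,τ) ↦ (min(s,τ)/max(s,τ)) · ((1−max(s,τ))/(1−min(s,τ))) is positive semidefinite on (0,1)². -/

import Mathlib

open Set MeasureTheory

/-- Integral representation of the product of two "half-open interval" indicators. -/
lemma minker_key (a b x y : ℝ) (ha : 0 < a) (hb : 0 < b) :
    ∫ z : ℝ, (Ioo (0:ℝ) a).indicator (fun _ => x) z * (Ioo (0:ℝ) b).indicator (fun _ => y) z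
      = min a b * x * y := by
  have h1 : (fun z : ℝ => (Ioo (0:ℝ) a).indicator (fun _ => x) z *
      (Ioo (0:ℝ) b).indicator (fun _ => y) z)
      = (Ioo (0:ℝ) (min a b)).indicator (fun _ => x * y) := by
    funext z
    rw [← Set.inter_indicator_mul]
    have : Ioo (0:ℝ) a ∩ Ioo (0:ℝ) b = Ioo (0:ℝ) (min a b) := by
      rw [Set.Ioo_inter_Ioo]; simp
    rw [this]
  rw [h1, MeasureTheory.integral_indicator_const _ measurableSet_Ioo]
  rw [Real.volume_real_Ioo_of_le (by simp [le_min_iff, ha.le, hb.le]), smul_eq_mul]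
  ring

lemma indicator_const_integrable (a x : ℝ) :
    Integrable ((Ioo (0:ℝ) a).indicator (fun _ => x)) := by
  rw [integrable_indicator_iff measurableSet_Ioo]
  exact (integrableOn_const_iff).mpr (Or.inr (by rw [Real.volume_Ioo]; exact ENNReal.ofReal_lt_top))

lemma indicator_mul_integrable (a b x y : ℝ) :
    Integrable (fun z : ℝ => (Ioo (0:ℝ) a).indicator (fun _ => x) z *
      (Ioo (0:ℝ) b).indicator (fun _ => y) z) := by
  have h1 : (fun z : ℝ => (Ioo (0:ℝ) a).indicator (fun _ => x) z *
      (Ioo (0:ℝ) b).indicator (fun _ => y) z)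
      = (Ioo (0:ℝ) a ∩ Ioo (0:ℝ) b).indicator (fun _ => x * y) := by
    funext z; rw [← Set.inter_indicator_mul]
  rw [h1, integrable_indicator_iff (measurableSet_Ioo.inter measurableSet_Ioo)]
  refine (integrableOn_const_iff).mpr (Or.inr ?_)
  exact lt_of_le_of_lt (measure_mono Set.inter_subset_left)
    (by rw [Real.volume_Ioo]; exact ENNReal.ofReal_lt_top)

/-- The `min` kernel is positive semidefinite on positive reals. -/
lemma minker_psd (m : ℕ) (u : Fin m → ℝ) (hu : ∀ i, 0 < u i) (d : Fin m → ℝ) :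
    0 ≤ ∑ i : Fin m, ∑ j : Fin m, min (u i) (u j) * d i * d j := by
  set h : Fin m → ℝ → ℝ := fun i => (Ioo (0:ℝ) (u i)).indicator (fun _ => d i) with hh
  have key : ∀ i j, min (u i) (u j) * d i * d j = ∫ z : ℝ, h i z * h j z := by
    intro i j
    rw [minker_key (u i) (u j) (d i) (d j) (hu i) (hu j)]
  calc ∑ i : Fin m, ∑ j : Fin m, min (u i) (u j) * d i * d j
      = ∑ i : Fin m, ∑ j : Fin m, ∫ z : ℝ, h i z * h j z := by
        refine Finset.sum_congr rfl fun i _ => Finset.sum_congr rfl fun j _ => key i j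
    _ = ∫ z : ℝ, ∑ i : Fin m, ∑ j : Fin m, h i z * h j z := by
        rw [MeasureTheory.integral_finset_sum]
        · refine Finset.sum_congr rfl fun i _ => ?_
          rw [MeasureTheory.integral_finset_sum]
          intro j _
          exact indicator_mul_integrable _ _ _ _
        · intro i _
          exact integrable_finset_sum _ fun j _ => indicator_mul_integrable _ _ _ _
    _ = ∫ z : ℝ, (∑ i : Fin m, h i z)^2 := by
        congr 1; funext z
        rw [sq, Finset.sum_mul_sum]
    _ ≥ 0 := integral_nonneg fun z => sq_nonneg _

/-- Product of two `min` kernels is positive semidefinite. -/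
lemma prodker_psd (m : ℕ) (u v : Fin m → ℝ) (hu : ∀ i, 0 < u i) (hv : ∀ i, 0 < v i)
    (c : Fin m → ℝ) :
    0 ≤ ∑ i : Fin m, ∑ j : Fin m, min (u i) (u j) * min (v i) (v j) * c i * c j := by
  set g : Fin m → ℝ → ℝ := fun i => (Ioo (0:ℝ) (v i)).indicator (fun _ => c i) with hg
  have key : ∀ i j, min (u i) (u j) * min (v i) (v j) * c i * c j
      = ∫ z : ℝ, min (u i) (u j) * (g i z * g j z) := by
    intro i j
    rw [MeasureTheory.integral_const_mul, minker_key (v i) (v j) (c i) (c j) (hv i) (hv j)]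
    ring
  calc (0:ℝ)
      ≤ ∫ z : ℝ, ∑ i : Fin m, ∑ j : Fin m, min (u i) (u j) * (g i z * g j z) := by
        refine integral_nonneg fun z => ?_
        have := minker_psd m u hu (fun i => g i z)
        calc (0:ℝ) ≤ ∑ i : Fin m, ∑ j : Fin m, min (u i) (u j) * g i z * g j z := this
          _ = ∑ i : Fin m, ∑ j : Fin m, min (u i) (u j) * (g i z * g j z) := by
              refine Finset.sum_congr rfl fun i _ => Finset.sum_congr rfl fun j _ => by ring
    _ = ∑ i : Fin m, ∑ j : Fin m, ∫ z : ℝ, min (u i) (u j) * (g i z * g j z) := by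
        rw [MeasureTheory.integral_finset_sum]
        · refine Finset.sum_congr rfl fun i _ => ?_
          rw [MeasureTheory.integral_finset_sum]
          intro j _
          exact (indicator_mul_integrable _ _ _ _).const_mul _
        · intro i _
          exact integrable_finset_sum _ fun j _ => (indicator_mul_integrable _ _ _ _).const_mul _
    _ = ∑ i : Fin m, ∑ j : Fin m, min (u i) (u j) * min (v i) (v j) * c i * c j := by
        refine Finset.sum_congr rfl fun i _ => Finset.sum_congr rfl fun j _ => (key i j).symm

/-- The kernel `(s,τ) ↦ (min(s,τ)/max(s,τ)) · ((1-max(s,τ))/(1-min(s,τ)))` is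
positive semidefinite on `(0,1)²`. -/
theorem statement12 (m : ℕ) (t : Fin m → ℝ) (ht : ∀ i, t i ∈ Ioo (0:ℝ) 1) (c : Fin m → ℝ) :
    0 ≤ ∑ i : Fin m, ∑ j : Fin m,
      (min (t i) (t j) / max (t i) (t j)) *
        ((1 - max (t i) (t j)) / (1 - min (t i) (t j))) * c i * c j := by
  set a : Fin m → ℝ := fun i => t i / (1 - t i) with ha
  set b : Fin m → ℝ := fun i => (1 - t i) / t i with hb
  have hpos : ∀ i, 0 < t i := fun i => (ht i).1
  have hlt : ∀ i, t i < 1 := fun i => (ht i).2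
  have hapos : ∀ i, 0 < a i := fun i => div_pos (hpos i) (by linarith [hlt i])
  have hbpos : ∀ i, 0 < b i := fun i => div_pos (by linarith [hlt i]) (hpos i)
  have hkey : ∀ i j : Fin m,
      (min (t i) (t j) / max (t i) (t j)) *
        ((1 - max (t i) (t j)) / (1 - min (t i) (t j))) * c i * c j
      = min (a i) (a j) * min (b i) (b j) * c i * c j := by
    intro i j
    have main : ∀ i j : Fin m, t i ≤ t j →
        (min (t i) (t j) / max (t i) (t j)) *
          ((1 - max (t i) (t j)) / (1 - min (t i) (t j)))
        = min (a i) (a j) * min (b i) (b j) := by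
      intro i j hij
      have h1i : (0:ℝ) < 1 - t i := by linarith [hlt i]
      have h1j : (0:ℝ) < 1 - t j := by linarith [hlt j]
      have haij : a i ≤ a j := by
        rw [ha, div_le_div_iff₀ h1i h1j]; nlinarith
      have hbij : b j ≤ b i := by
        rw [hb, div_le_div_iff₀ (hpos j) (hpos i)]; nlinarith
      rw [min_eq_left hij, max_eq_right hij, min_eq_left haij, min_eq_right hbij, ha, hb]
      field_simp
    rcases le_total (t i) (t j) with hij | hji
    · rw [main i j hij]
    · have := main j i hji
      rw [min_comm (t i) (t j), max_comm (t i) (t j), this,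
        min_comm (a j) (a i), min_comm (b j) (b i)]
  calc (0:ℝ) ≤ ∑ i : Fin m, ∑ j : Fin m, min (a i) (a j) * min (b i) (b j) * c i * c j :=
        prodker_psd m a b hapos hbpos c
    _ = _ := by
        refine Finset.sum_congr rfl fun i _ => Finset.sum_congr rfl fun j _ => (hkey i j).symm
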